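/- arXiv:2207.04641 — 2 statements merged into one kernel-verified Lean document; each statement's English description precedes it below -/
import Mathlib

section
/- Let G be a finite non-cyclic group. Then the complement of the enhanced power graph of G has exactly one connected component apart from isolated vertices; equivalently, any two non-isolated vertices of the complement of the enhanced power graph of G are connected by a path in that graph. -/
/-- A subgroup `M` of `G` is a maximal cyclic subgroup if it is cyclic and is not properly
contained in any cyclic subgroup of `G` other than itself. -/
def IsMaximalCyclic {G : Type*} [Group G] (M : Subgroup G) : Prop :=
  (∃ g : G, M = Subgroup.zpowers g) ∧
    ∀ K : Subgroup G, (∃ g : G, K = Subgroup.zpowers g) → M ≤ K → M = K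

/-- The complement of the enhanced power graph of a group `G`: distinct `x, y` are adjacent
iff no cyclic subgroup of `G` contains both. -/
def coPE (G : Type*) [Group G] : SimpleGraph G where
  Adj x y := x ≠ y ∧ ¬∃ z : G, x ∈ Subgroup.zpowers z ∧ y ∈ Subgroup.zpowers z
  symm := by
    constructor
    rintro x y ⟨h1, h2⟩
    exact ⟨h1.symm, fun ⟨z, hz⟩ => h2 ⟨z, hz.2, hz.1⟩⟩
  loopless := by constructor; rintro x ⟨h, -⟩; exact h rfl

lemma exists_maxcyc {G : Type*} [Group G] [Finite G] (g : G) :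
    ∃ M : Subgroup G, IsMaximalCyclic M ∧ g ∈ M := by
  obtain ⟨M, hM, hmax⟩ := Set.Finite.exists_maximalFor (id : Subgroup G → Subgroup G)
    {K : Subgroup G | (∃ h, K = Subgroup.zpowers h) ∧ g ∈ K}
    (Set.toFinite _) ⟨Subgroup.zpowers g, ⟨g, rfl⟩, Subgroup.mem_zpowers g⟩
  exact ⟨M, ⟨hM.1, fun K hK hle => le_antisymm hle (hmax ⟨hK, hle hM.2⟩ hle)⟩, hM.2⟩

lemma adj_gen {G : Type*} [Group G] [Finite G] {x a : G} (h : (coPE G).Adj x a) :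
    ∃ M : Subgroup G, ∃ m : G, IsMaximalCyclic M ∧ M = Subgroup.zpowers m ∧
      (coPE G).Adj x m := by
  obtain ⟨M, hM, haM⟩ := exists_maxcyc a
  obtain ⟨m, hm⟩ := hM.1
  have hxM : x ∉ M := fun hx => h.2 ⟨m, by rw [hm] at hx; exact hx,
    by rw [hm] at haM; exact haM⟩
  refine ⟨M, m, hM, hm, ?_, ?_⟩
  · intro e; exact hxM (e ▸ hm ▸ Subgroup.mem_zpowers m)
  · rintro ⟨z, hxz, hmz⟩
    have hle : M ≤ Subgroup.zpowers z := by
      rw [hm]; exact (Subgroup.zpowers_le).2 hmz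
    have heq := hM.2 _ ⟨z, rfl⟩ hle
    exact hxM (heq ▸ hxz)

lemma gen_adj {G : Type*} [Group G] {M N : Subgroup G} {m n : G}
    (hM : IsMaximalCyclic M) (hN : IsMaximalCyclic N)
    (hm : M = Subgroup.zpowers m) (hn : N = Subgroup.zpowers n) (hMN : M ≠ N) :
    (coPE G).Adj m n := by
  constructor
  · intro e; exact hMN (by rw [hm, hn, e])
  · rintro ⟨z, hmz, hnz⟩
    have h1 := hM.2 (Subgroup.zpowers z) ⟨z, rfl⟩
      (by rw [hm]; exact (Subgroup.zpowers_le).2 hmz)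
    have h2 := hN.2 (Subgroup.zpowers z) ⟨z, rfl⟩
      (by rw [hn]; exact (Subgroup.zpowers_le).2 hnz)
    exact hMN (h1.trans h2.symm)

lemma exists_other {G : Type*} [Group G] [Finite G] {M : Subgroup G}
    (hM : IsMaximalCyclic M) (hG : ¬ IsCyclic G) :
    ∃ N : Subgroup G, ∃ n : G, IsMaximalCyclic N ∧ N = Subgroup.zpowers n ∧ N ≠ M := by
  have : ∃ g : G, g ∉ M := by
    by_contra h; push_neg at h
    obtain ⟨m, hm⟩ := hM.1
    exact hG ⟨⟨m, fun g => by have := h g; rw [hm] at this; exact this⟩⟩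
  obtain ⟨g, hg⟩ := this
  obtain ⟨N, hN, hgN⟩ := exists_maxcyc g
  obtain ⟨n, hn⟩ := hN.1
  exact ⟨N, n, hN, hn, fun e => hg (e ▸ hgN)⟩

theorem coPE_one_component {G : Type*} [Group G] [Finite G] (hG : ¬ IsCyclic G)
    (x y : G) (hx : ∃ a, (coPE G).Adj x a) (hy : ∃ b, (coPE G).Adj y b) :
    (coPE G).Reachable x y := by
  obtain ⟨a, ha⟩ := hx
  obtain ⟨b, hb⟩ := hy
  obtain ⟨M, m, hM, hm, hxm⟩ := adj_gen ha
  obtain ⟨N, n, hN, hn, hyn⟩ := adj_gen hb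
  by_cases hMN : M = N
  · obtain ⟨P, p, hP, hp, hPM⟩ := exists_other hM hG
    exact hxm.reachable.trans ((gen_adj hM hP hm hp (Ne.symm hPM)).reachable.trans
      ((gen_adj hP hN hp hn (hMN ▸ hPM)).reachable.trans hyn.reachable.symm))
  · exact hxm.reachable.trans ((gen_adj hM hN hm hn hMN).reachable.trans hyn.reachable.symm)
end

section
/- Let G be a finite group. Then the complement of the enhanced power graph of G is bipartite (i.e., 2-colorable) if and only if G is cyclic. -/
lemma exists_maximalCyclic_mem {G : Type*} [Group G] [Finite G] (x : G) :
    ∃ M : Subgroup G, IsMaximalCyclic M ∧ x ∈ M := by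
  classical
  set s : Set (Subgroup G) := {K | (∃ g, K = Subgroup.zpowers g) ∧ x ∈ K} with hs_def
  have hs : s.Finite := Set.toFinite s
  have hne : s.Nonempty := ⟨Subgroup.zpowers x, ⟨x, rfl⟩, Subgroup.mem_zpowers x⟩
  obtain ⟨M, hMs, hmax⟩ := hs.exists_maximalFor id s hne
  refine ⟨M, ⟨hMs.1, ?_⟩, hMs.2⟩
  intro K hK hMK
  exact le_antisymm hMK (hmax (j := K) ⟨hK, hMK hMs.2⟩ hMK)

theorem coPE_bipartite_iff_cyclic {G : Type*} [Group G] [Finite G] :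
    (coPE G).Colorable 2 ↔ IsCyclic G := by
  constructor
  · rintro ⟨C⟩
    by_contra hnc
    -- every maximal cyclic subgroup is proper
    have hproper : ∀ M : Subgroup G, IsMaximalCyclic M → M ≠ ⊤ := by
      rintro M ⟨⟨g, rfl⟩, -⟩ htop
      exact hnc ⟨⟨g, fun y => show y ∈ Subgroup.zpowers g by rw [htop]; exact Subgroup.mem_top y⟩⟩
    obtain ⟨M1, hM1, -⟩ := exists_maximalCyclic_mem (1 : G)
    obtain ⟨x2, -, hx2⟩ := SetLike.not_le_iff_exists.mp
      (show ¬ (⊤ : Subgroup G) ≤ M1 from fun h => hproper M1 hM1 (top_le_iff.mp h))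
    obtain ⟨M2, hM2, hx2M⟩ := exists_maximalCyclic_mem x2
    have h12 : M1 ≠ M2 := fun h => hx2 (h ▸ hx2M)
    have hnle12 : ¬ M1 ≤ M2 := fun h => h12 (hM1.2 M2 hM2.1 h)
    have hnle21 : ¬ M2 ≤ M1 := fun h => h12 ((hM2.2 M1 hM1.1 h).symm)
    obtain ⟨a, haM1, haM2⟩ := SetLike.not_le_iff_exists.mp hnle12
    obtain ⟨b, hbM2, hbM1⟩ := SetLike.not_le_iff_exists.mp hnle21
    have hab1 : a * b ∉ M1 := fun h => hbM1 (by simpa using M1.mul_mem (M1.inv_mem haM1) h)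
    have hab2 : a * b ∉ M2 := fun h => haM2 (by simpa using M2.mul_mem h (M2.inv_mem hbM2))
    obtain ⟨M3, hM3, habM3⟩ := exists_maximalCyclic_mem (a * b)
    have h13 : M1 ≠ M3 := fun h => hab1 (h ▸ habM3)
    have h23 : M2 ≠ M3 := fun h => hab2 (h ▸ habM3)
    obtain ⟨g1, hg1⟩ := hM1.1
    obtain ⟨g2, hg2⟩ := hM2.1
    obtain ⟨g3, hg3⟩ := hM3.1
    have adj : ∀ M N : Subgroup G, ∀ g h : G, IsMaximalCyclic M → IsMaximalCyclic N →
        M = Subgroup.zpowers g → N = Subgroup.zpowers h → M ≠ N → (coPE G).Adj g h := by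
      intro M N g h hM hN hg hh hMN
      refine ⟨fun he => hMN (by rw [hg, hh, he]), ?_⟩
      rintro ⟨z, hz1, hz2⟩
      have h1 : M ≤ Subgroup.zpowers z := hg ▸ Subgroup.zpowers_le.mpr hz1
      have h2 : N ≤ Subgroup.zpowers z := hh ▸ Subgroup.zpowers_le.mpr hz2
      exact hMN ((hM.2 _ ⟨z, rfl⟩ h1).trans (hN.2 _ ⟨z, rfl⟩ h2).symm)
    have a12 := C.valid (adj M1 M2 g1 g2 hM1 hM2 hg1 hg2 h12)
    have a13 := C.valid (adj M1 M3 g1 g3 hM1 hM3 hg1 hg3 h13)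
    have a23 := C.valid (adj M2 M3 g2 g3 hM2 hM3 hg2 hg3 h23)
    have v12 : (C g1).val ≠ (C g2).val := fun h => a12 (Fin.val_injective h)
    have v13 : (C g1).val ≠ (C g3).val := fun h => a13 (Fin.val_injective h)
    have v23 : (C g2).val ≠ (C g3).val := fun h => a23 (Fin.val_injective h)
    have l1 := (C g1).isLt
    have l2 := (C g2).isLt
    have l3 := (C g3).isLt
    omega
  · intro h
    obtain ⟨g, hg⟩ := h.exists_generator
    exact ⟨SimpleGraph.Coloring.mk (fun _ => (0 : Fin 2))
      (fun h => absurd ⟨g, hg _, hg _⟩ h.2)⟩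
end
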